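/- arXiv:chao-dyn/9711016 — 2 statements merged into one kernel-verified Lean document; each statement's English description precedes it below -/
import Mathlib

section
/- The value of the normalized Fourier-transformed form factor F₂(κ) = −2πκ² ∫₀^∞ y J₂(κ√(8πy)) (1 − coth y) dy admits for all κ > 0 the convergent series expansion F₂(κ) = π²κ⁴ ∑_{n≥0} ((−π)^n ζ(n+3)/n!) κ^{2n}, where J₂ is the Bessel function of order 2 and ζ the Riemann zeta function. -/
open MeasureTheory

/-- Bessel function of order 2, via its power series. -/
noncomputable def besselJ2 (x : ℝ) : ℝ :=
  ∑' m : ℕ, (-1) ^ m * (x / 2) ^ (2 * m + 2) / (Nat.factorial m * Nat.factorial (m + 2))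

/-- The Riemann zeta value `ζ(n) = ∑_{j≥1} j^{−n}` (real form). -/
noncomputable def zetaNat (n : ℕ) : ℝ := ∑' j : ℕ, 1 / ((j : ℝ) + 1) ^ n

open Real Set

/-! ### Auxiliary lemmas -/

lemma ff_int_pow_exp (n : ℕ) {r : ℝ} (hr : 0 < r) :
    ∫ t in Set.Ioi (0:ℝ), t ^ n * Real.exp (-(r * t)) = (n.factorial : ℝ) / r ^ (n+1) := by
  have h := Real.integral_rpow_mul_exp_neg_mul_Ioi (a := (n:ℝ)+1) (r := r) (by positivity) hr
  have h2 : ∫ t in Set.Ioi (0:ℝ), t ^ ((n:ℝ) + 1 - 1) * Real.exp (-(r * t))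
      = ∫ t in Set.Ioi (0:ℝ), t ^ n * Real.exp (-(r * t)) := by
    refine setIntegral_congr_fun measurableSet_Ioi (fun t ht => ?_)
    rw [show (n:ℝ) + 1 - 1 = (n:ℝ) by ring, Real.rpow_natCast]
  rw [h2] at h
  rw [h]
  rw [Real.Gamma_nat_eq_factorial,
    show ((n:ℝ)+1) = ((n+1:ℕ):ℝ) by push_cast; ring, Real.rpow_natCast]
  rw [div_pow, one_pow, div_mul_eq_mul_div, one_mul]

lemma ff_integrable_pow_exp (n : ℕ) {r : ℝ} (hr : 0 < r) :
    IntegrableOn (fun t : ℝ => t ^ n * Real.exp (-(r * t))) (Set.Ioi 0) := by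
  have h := integrableOn_rpow_mul_exp_neg_mul_rpow (p := 1) (s := (n:ℝ)) (b := r)
    (lt_of_lt_of_le neg_one_lt_zero (Nat.cast_nonneg n)) zero_lt_one hr
  refine h.congr_fun (fun x hx => ?_) measurableSet_Ioi
  beta_reduce
  rw [Real.rpow_natCast, Real.rpow_one, neg_mul]

lemma ff_zeta_summable {k : ℕ} (hk : 2 ≤ k) :
    Summable (fun j : ℕ => 1 / ((j:ℝ)+1) ^ k) := by
  have h0 : Summable (fun n : ℕ => 1 / (n:ℝ) ^ k) :=
    Real.summable_one_div_nat_pow.mpr hk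
  have h1 := (summable_nat_add_iff 1).mpr h0
  refine h1.congr fun j => ?_
  push_cast
  ring_nf

lemma ff_coth (y : ℝ) (hy : 0 < y) :
    1 - Real.cosh y / Real.sinh y = ∑' j : ℕ, (-2) * Real.exp (-(2*((j:ℝ)+1) * y)) := by
  have hr1 : Real.exp (-(2*y)) < 1 := Real.exp_lt_one_iff.mpr (by linarith)
  have hr0 : 0 ≤ Real.exp (-(2*y)) := (Real.exp_pos _).le
  have hterm : ∀ j : ℕ, (-2) * Real.exp (-(2*((j:ℝ)+1) * y))
      = (-2) * Real.exp (-(2*y)) * Real.exp (-(2*y)) ^ j := by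
    intro j
    rw [show -(2*((j:ℝ)+1) * y) = -(2*y) + (j:ℝ)*(-(2*y)) by ring, Real.exp_add,
      Real.exp_nat_mul, mul_assoc]
  rw [tsum_congr hterm, tsum_mul_left, tsum_geometric_of_lt_one hr0 hr1]
  have hE : Real.exp y * Real.exp (-y) = 1 := by rw [← Real.exp_add]; simp
  have h2 : Real.exp (-(2*y)) = Real.exp (-y) * Real.exp (-y) := by
    rw [← Real.exp_add]; ring_nf
  have hEF : 0 < Real.exp y - Real.exp (-y) := by
    have := Real.exp_lt_exp.mpr (show -y < y by linarith); linarith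
  have h1 : (1:ℝ) - Real.exp (-y) * Real.exp (-y) ≠ 0 := by nlinarith
  rw [Real.cosh_eq, Real.sinh_eq, h2]
  field_simp
  have h3 : Real.exp (-y) ^ 2 * 2 * (Real.exp y - Real.exp (-y))
      = 2 * Real.exp (-y) * (1 - Real.exp (-y) ^ 2) := by
    linear_combination (2 * Real.exp (-y)) * hE
  rw [h3, mul_div_assoc, div_self (by rw [sq]; exact h1)]
  ring

lemma ff_bessel (κ y : ℝ) (hy : 0 ≤ y) :
    besselJ2 (κ * Real.sqrt (8*Real.pi*y))
      = ∑' m : ℕ, (-1)^m * (2*Real.pi*κ^2*y)^(m+1)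
          / (Nat.factorial m * Nat.factorial (m+2)) := by
  unfold besselJ2
  refine tsum_congr fun m => ?_
  have h8 : (0:ℝ) ≤ 8*Real.pi*y := by positivity
  have hsq : Real.sqrt (8*Real.pi*y) ^ 2 = 8*Real.pi*y := Real.sq_sqrt h8
  have : (κ * Real.sqrt (8*Real.pi*y) / 2) ^ (2*m+2)
      = (2*Real.pi*κ^2*y)^(m+1) := by
    rw [show 2*m+2 = 2*(m+1) by ring, pow_mul]
    congr 1
    rw [div_pow, mul_pow, hsq]
    ring
  rw [this]

lemma ff_sumA (a y : ℝ) :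
    Summable (fun m : ℕ => ‖y * ((-1:ℝ)^m * (a*y)^(m+1)
      / (Nat.factorial m * Nat.factorial (m+2)))‖) := by
  refine Summable.of_nonneg_of_le (fun m => norm_nonneg _) (fun m => ?_)
    (((Real.summable_pow_div_factorial |a*y|).mul_left (|y| * |a*y|)))
  have h1 : ‖y * ((-1:ℝ)^m * (a*y)^(m+1) / (Nat.factorial m * Nat.factorial (m+2)))‖
      = |y| * (|a*y|^(m+1) / (Nat.factorial m * Nat.factorial (m+2))) := by
    rw [norm_mul, norm_div, norm_mul, norm_pow, norm_pow, norm_neg, norm_one, one_pow, one_mul]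
    simp [abs_mul, Nat.abs_cast, Real.norm_eq_abs]
  rw [h1, pow_succ]
  have hfm : (1:ℝ) ≤ (Nat.factorial m : ℝ) := by
    exact_mod_cast Nat.one_le_iff_ne_zero.mpr (Nat.factorial_ne_zero m)
  calc |y| * (|a*y|^m * |a*y| / (Nat.factorial m * Nat.factorial (m+2)))
      ≤ |y| * (|a*y|^m * |a*y| / (Nat.factorial m)) := by
        gcongr
        exact_mod_cast Nat.le_mul_of_pos_right _ (Nat.pos_of_ne_zero (Nat.factorial_ne_zero (m+2)))
    _ = |y| * |a*y| * (|a*y|^m / (Nat.factorial m)) := by ring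

lemma ff_sumB (y : ℝ) (hy : 0 < y) :
    Summable (fun j : ℕ => ‖(-2:ℝ) * Real.exp (-(2*((j:ℝ)+1) * y))‖) := by
  have hr1 : Real.exp (-(2*y)) < 1 := Real.exp_lt_one_iff.mpr (by linarith)
  have hr0 : 0 ≤ Real.exp (-(2*y)) := (Real.exp_pos _).le
  refine ((summable_geometric_of_lt_one hr0 hr1).mul_left
    (2 * Real.exp (-(2*y)))).congr fun j => ?_
  rw [norm_mul, Real.norm_eq_abs, Real.norm_eq_abs, abs_of_pos (Real.exp_pos _)]
  rw [show -(2*((j:ℝ)+1) * y) = -(2*y) + (j:ℝ)*(-(2*y)) by ring, Real.exp_add,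
    Real.exp_nat_mul]
  norm_num
  ring

lemma ff_pointwise (a y : ℝ) (hy : 0 < y) :
    y * (∑' m : ℕ, (-1:ℝ)^m * (a*y)^(m+1) / (Nat.factorial m * Nat.factorial (m+2)))
      * (1 - Real.cosh y / Real.sinh y)
    = ∑' p : ℕ × ℕ, ((-2) * (-1:ℝ)^p.1 * a^(p.1+1)
        / (Nat.factorial p.1 * Nat.factorial (p.1+2)))
        * (y^(p.1+2) * Real.exp (-(2*((p.2:ℝ)+1) * y))) := by
  rw [ff_coth y hy, ← tsum_mul_left (a := y)]
  rw [tsum_mul_tsum_of_summable_norm (ff_sumA a y) (ff_sumB y hy)]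
  refine tsum_congr fun p => ?_
  rw [mul_pow a y]
  ring

/-- coefficient -/
noncomputable def ffC (a : ℝ) (m : ℕ) : ℝ :=
  (-2) * (-1:ℝ)^m * a^(m+1) / (Nat.factorial m * Nat.factorial (m+2))

/-- summand -/
noncomputable def ffG (a : ℝ) (p : ℕ × ℕ) (y : ℝ) : ℝ :=
  ffC a p.1 * (y^(p.1+2) * Real.exp (-(2*((p.2:ℝ)+1) * y)))

lemma ffG_integrable (a : ℝ) (p : ℕ × ℕ) : IntegrableOn (ffG a p) (Set.Ioi 0) := by
  unfold ffG
  exact (ff_integrable_pow_exp (p.1+2) (r := 2*((p.2:ℝ)+1)) (by positivity)).const_mul _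

lemma ffC_abs {a : ℝ} (ha : 0 < a) (m : ℕ) :
    |ffC a m| = 2*a^(m+1)/(Nat.factorial m * Nat.factorial (m+2)) := by
  unfold ffC
  rw [abs_div, abs_mul, abs_mul, abs_pow, abs_of_pos (pow_pos ha _),
    abs_of_nonneg (by positivity :
      (0:ℝ) ≤ (Nat.factorial m : ℝ) * (Nat.factorial (m+2) : ℝ))]
  norm_num

lemma ffG_norm_integral {a : ℝ} (ha : 0 < a) (p : ℕ × ℕ) :
    ∫ y in Set.Ioi (0:ℝ), ‖ffG a p y‖
      = |ffC a p.1| * ((Nat.factorial (p.1+2) : ℝ) / (2*((p.2:ℝ)+1))^(p.1+2+1)) := by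
  have h1 : ∫ y in Set.Ioi (0:ℝ), ‖ffG a p y‖
      = ∫ y in Set.Ioi (0:ℝ), |ffC a p.1| * (y^(p.1+2) * Real.exp (-(2*((p.2:ℝ)+1) * y))) := by
    refine setIntegral_congr_fun measurableSet_Ioi (fun y hy => ?_)
    unfold ffG
    rw [Real.norm_eq_abs, abs_mul, abs_mul, abs_of_pos (pow_pos (mem_Ioi.mp hy) _),
      abs_of_pos (Real.exp_pos _)]
  rw [h1, MeasureTheory.integral_const_mul, ff_int_pow_exp (p.1+2) (by positivity)]

lemma ffG_integral {a : ℝ} (p : ℕ × ℕ) :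
    ∫ y in Set.Ioi (0:ℝ), ffG a p y
      = ffC a p.1 * ((Nat.factorial (p.1+2) : ℝ) / (2*((p.2:ℝ)+1))^(p.1+2+1)) := by
  unfold ffG
  rw [MeasureTheory.integral_const_mul, ff_int_pow_exp (p.1+2) (by positivity)]

set_option maxHeartbeats 1000000 in
lemma ffG_norm_summable {a : ℝ} (ha : 0 < a) :
    Summable (fun p : ℕ × ℕ => ∫ y in Set.Ioi (0:ℝ), ‖ffG a p y‖) := by
  refine Summable.congr ?_ (fun p => (ffG_norm_integral ha p).symm)
  have hu : Summable (fun m : ℕ => (a/4) * ((a/2)^m / (Nat.factorial m : ℝ))) :=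
    (Real.summable_pow_div_factorial (a/2)).mul_left (a/4)
  have hv : Summable (fun j : ℕ => 1 / ((j:ℝ)+1) ^ 2) := ff_zeta_summable le_rfl
  have hprod : Summable (fun p : ℕ × ℕ =>
      ((a/4) * ((a/2)^p.1 / (Nat.factorial p.1 : ℝ))) * (1 / ((p.2:ℝ)+1) ^ 2)) :=
    hu.mul_of_nonneg hv (fun m => by positivity) (fun j => by positivity)
  refine Summable.of_nonneg_of_le (fun p => by positivity) (fun p => ?_) hprod
  obtain ⟨m, j⟩ := p
  have hfm : (Nat.factorial m : ℝ) ≠ 0 := by positivity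
  have hfm2 : (Nat.factorial (m+2) : ℝ) ≠ 0 := by positivity
  have hj1 : (1:ℝ) ≤ (j:ℝ)+1 := by
    have := (Nat.cast_nonneg (α := ℝ) j); linarith
  have hL : |ffC a m| * ((Nat.factorial (m+2) : ℝ) / (2*((j:ℝ)+1))^(m+2+1))
      = (a^(m+1)/((Nat.factorial m : ℝ) * 2^(m+2))) * (1/((j:ℝ)+1)^(m+2+1)) := by
    rw [ffC_abs ha, mul_pow]
    field_simp
    ring
  have hR : ((a/4) * ((a/2)^m / (Nat.factorial m : ℝ))) * (1 / ((j:ℝ)+1) ^ 2)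
      = (a^(m+1)/((Nat.factorial m : ℝ) * 2^(m+2))) * (1/((j:ℝ)+1)^2) := by
    rw [div_pow]
    field_simp
    ring
  rw [hL, hR]
  gcongr
  · omega

/-! ### Main theorem -/

/-- The form factor `F₂(κ) = −2πκ² ∫₀^∞ y J₂(κ√(8πy)) (1 − coth y) dy` admits,
for all `κ > 0`, the convergent series expansion
`F₂(κ) = π²κ⁴ ∑_{n≥0} ((−π)^n ζ(n+3)/n!) κ^{2n}`. -/
theorem form_factor_series (κ : ℝ) (hκ : 0 < κ) :
    Summable (fun n : ℕ => (-Real.pi) ^ n * zetaNat (n + 3) / (Nat.factorial n) * κ ^ (2 * n)) ∧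
    -2 * Real.pi * κ ^ 2 *
        ∫ y in Set.Ioi (0:ℝ),
          y * besselJ2 (κ * Real.sqrt (8 * Real.pi * y)) * (1 - Real.cosh y / Real.sinh y)
      = Real.pi ^ 2 * κ ^ 4 *
          ∑' n : ℕ, (-Real.pi) ^ n * zetaNat (n + 3) / (Nat.factorial n) * κ ^ (2 * n) := by
  have ha : (0:ℝ) < 2 * Real.pi * κ ^ 2 := by positivity
  have hzeta_nonneg : ∀ k : ℕ, 0 ≤ zetaNat k := fun k => tsum_nonneg (fun j => by positivity)
  have hzeta_le : ∀ n : ℕ, zetaNat (n+3) ≤ zetaNat 2 := by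
    intro n
    refine Summable.tsum_le_tsum (fun j => ?_) (ff_zeta_summable (by omega)) (ff_zeta_summable le_rfl)
    have hj1 : (1:ℝ) ≤ (j:ℝ)+1 := by
      have := (Nat.cast_nonneg (α := ℝ) j); linarith
    gcongr
    · omega
  have hsummable_s : Summable
      (fun n : ℕ => (-Real.pi) ^ n * zetaNat (n + 3) / (Nat.factorial n) * κ ^ (2 * n)) := by
    refine Summable.of_norm_bounded
      (g := fun n => zetaNat 2 * ((Real.pi * κ^2)^n / (Nat.factorial n : ℝ)))
      ((Real.summable_pow_div_factorial _).mul_left _) (fun n => ?_)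
    show ‖(-Real.pi) ^ n * zetaNat (n + 3) / (Nat.factorial n : ℝ) * κ ^ (2 * n)‖
      ≤ zetaNat 2 * ((Real.pi * κ^2)^n / (Nat.factorial n : ℝ))
    have h1 : ‖(-Real.pi) ^ n * zetaNat (n + 3) / (Nat.factorial n : ℝ) * κ ^ (2 * n)‖
        = Real.pi^n * zetaNat (n+3) / (Nat.factorial n : ℝ) * κ^(2*n) := by
      rw [Real.norm_eq_abs, abs_mul, abs_div, abs_mul, abs_pow, abs_pow, abs_neg,
        abs_of_pos Real.pi_pos, abs_of_nonneg (hzeta_nonneg _), Nat.abs_cast,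
        abs_of_pos hκ]
    rw [h1, mul_pow, ← pow_mul]
    calc Real.pi^n * zetaNat (n+3) / (Nat.factorial n : ℝ) * κ^(2*n)
        = zetaNat (n+3) * (Real.pi^n * κ^(2*n) / (Nat.factorial n : ℝ)) := by ring
      _ ≤ zetaNat 2 * (Real.pi^n * κ^(2*n) / (Nat.factorial n : ℝ)) := by
          refine mul_le_mul_of_nonneg_right (hzeta_le n) (by positivity)
  refine ⟨hsummable_s, ?_⟩
  have hstep1 : (∫ y in Set.Ioi (0:ℝ),
        y * besselJ2 (κ * Real.sqrt (8 * Real.pi * y)) * (1 - Real.cosh y / Real.sinh y))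
      = ∫ y in Set.Ioi (0:ℝ), ∑' p : ℕ × ℕ, ffG (2 * Real.pi * κ ^ 2) p y := by
    refine setIntegral_congr_fun measurableSet_Ioi (fun y hy => ?_)
    rw [ff_bessel κ y (le_of_lt (mem_Ioi.mp hy)),
      ff_pointwise (2 * Real.pi * κ ^ 2) y (mem_Ioi.mp hy)]
    rfl
  have hexch := MeasureTheory.integral_tsum_of_summable_integral_norm
    (F := fun p : ℕ × ℕ => ffG (2 * Real.pi * κ ^ 2) p)
    (μ := volume.restrict (Set.Ioi (0:ℝ)))
    (fun p => ffG_integrable _ p) (ffG_norm_summable ha)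
  rw [hstep1, ← hexch]
  have hsummable_int : Summable
      (fun p : ℕ × ℕ => ∫ y in Set.Ioi (0:ℝ), ffG (2 * Real.pi * κ ^ 2) p y) :=
    Summable.of_norm_bounded (ffG_norm_summable ha)
      (fun p => norm_integral_le_integral_norm _)
  have hsplit : (∑' p : ℕ × ℕ, ∫ y in Set.Ioi (0:ℝ), ffG (2 * Real.pi * κ ^ 2) p y)
      = ∑' m : ℕ, ∑' j : ℕ,
          (ffC (2 * Real.pi * κ ^ 2) m * ((Nat.factorial (m+2) : ℝ) / 2^(m+2+1)))
            * (1/((j:ℝ)+1)^(m+3)) := by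
    rw [Summable.tsum_prod hsummable_int]
    refine tsum_congr fun m => tsum_congr fun j => ?_
    rw [ffG_integral (m, j)]
    show ffC (2 * Real.pi * κ ^ 2) m * ((Nat.factorial (m+2) : ℝ) / (2*((j:ℝ)+1))^(m+2+1)) = _
    rw [show m+3 = m+2+1 by omega, mul_pow, div_mul_eq_div_div]
    ring
  rw [hsplit]
  have hinner : ∀ m : ℕ, (∑' j : ℕ,
        (ffC (2 * Real.pi * κ ^ 2) m * ((Nat.factorial (m+2) : ℝ) / 2^(m+2+1)))
          * (1/((j:ℝ)+1)^(m+3)))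
      = (ffC (2 * Real.pi * κ ^ 2) m * ((Nat.factorial (m+2) : ℝ) / 2^(m+2+1)))
          * zetaNat (m+3) := by
    intro m
    rw [tsum_mul_left]
    rfl
  rw [tsum_congr hinner, ← tsum_mul_left, ← tsum_mul_left]
  refine tsum_congr fun m => ?_
  unfold ffC
  have hfm : (Nat.factorial m : ℝ) ≠ 0 := by positivity
  have hfm2 : (Nat.factorial (m+2) : ℝ) ≠ 0 := by positivity
  rw [neg_pow Real.pi m, pow_mul, mul_pow, mul_pow]
  field_simp
  ring
end

section
/- Let Λ ⊂ ℝ² be a lattice of covolume N with minimal basis [V₁, V₂] (so |V₁| ≤ |V₂|, |V₁·V₂| ≤ |V₁|²/2, |det(V₁,V₂)| = N), and suppose |V₁|² ≥ C²N for some C > 0. Then |V₂|² ≤ N(C²/4 + 1/C²), and the circumradius R of the Dirichlet–Voronoi cell of Λ at the origin satisfies R² ≤ (N/4)·max(5/2, C² + 1/C²). -/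
private lemma ineqA' (a b q u w : ℝ) (hq : 0 ≤ q) (hq2 : 2*q ≤ a) (hab : a ≤ b)
    (hu : -a ≤ u) (hu' : u ≤ a) (hw : -b ≤ w) (hw' : w ≤ b)
    (huw : u + w ≤ a+b-2*q) (huw' : -(a+b-2*q) ≤ u + w) :
    b*u^2 + 2*q*u*w + a*w^2 ≤ a*b*(a+b-2*q) := by
  rcases le_total 0 (u+w) with h | h
  · nlinarith [mul_nonneg (mul_nonneg (by linarith : (0:ℝ) ≤ a-u+(b-w)-2*q) (by linarith : (0:ℝ) ≤ a-u)) (by linarith : (0:ℝ) ≤ b-w),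
      mul_nonneg (mul_nonneg (by linarith : (0:ℝ) ≤ a-u+(b-w)-2*q) (by linarith : (0:ℝ) ≤ a+u)) (by linarith : (0:ℝ) ≤ b+w),
      mul_nonneg (mul_nonneg (by linarith : (0:ℝ) ≤ a-u) (by linarith : (0:ℝ) ≤ b-w)) h]
  · nlinarith [mul_nonneg (mul_nonneg (by linarith : (0:ℝ) ≤ a+u+(b+w)-2*q) (by linarith : (0:ℝ) ≤ a-u)) (by linarith : (0:ℝ) ≤ b-w),
      mul_nonneg (mul_nonneg (by linarith : (0:ℝ) ≤ a+u+(b+w)-2*q) (by linarith : (0:ℝ) ≤ a+u)) (by linarith : (0:ℝ) ≤ b+w),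
      mul_nonneg (mul_nonneg (by linarith : (0:ℝ) ≤ a+u) (by linarith : (0:ℝ) ≤ b+w)) (by linarith : (0:ℝ) ≤ -(u+w))]

private lemma ineqI' (a b q N : ℝ) (hN : 0 < N) (hq : 0 ≤ q) (hq2 : 2*q ≤ a) (hab : a ≤ b)
    (hdet : a*b - q^2 = N^2) (h2a : N ≤ 2*a) :
    2*(a*b*(a+b-2*q)) ≤ 5*N^3 := by
  have ha : 0 < a := by nlinarith
  have hb : 0 < b := lt_of_lt_of_le ha hab
  have hz : a*b - q^2 - N^2 = 0 := by linarith
  have e1 : (N*a) * (a*b - q^2 - N^2) = 0 := by rw [hz, mul_zero]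
  have e2 : (N*b) * (a*b - q^2 - N^2) = 0 := by rw [hz, mul_zero]
  have e3 : (N*q) * (a*b - q^2 - N^2) = 0 := by rw [hz, mul_zero]
  have e4 : (N^2) * (a*b - q^2 - N^2) = 0 := by rw [hz, mul_zero]
  have e5 : (q^2) * (a*b - q^2 - N^2) = 0 := by rw [hz, mul_zero]
  have e6 : (q*a) * (a*b - q^2 - N^2) = 0 := by rw [hz, mul_zero]
  have e7 : (q*b) * (a*b - q^2 - N^2) = 0 := by rw [hz, mul_zero]
  have h4 : 4*q^2 ≤ N^2 + q^2 := by nlinarith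
  rcases le_total (4*q) N with h | h
  · have hbN : N ≤ 2*b := by linarith
    have h1 : 0 ≤ ((2*a-N)*(2*b-N))*(N^2+q^2) :=
      mul_nonneg (mul_nonneg (by linarith) (by linarith)) (by positivity)
    nlinarith [h1, e1, e2, e3, e4, e5,
      mul_nonneg (mul_nonneg (mul_nonneg hq (by linarith : (0:ℝ) ≤ N-4*q)) hN.le) hN.le,
      mul_nonneg (mul_nonneg (mul_nonneg hq hq) hq) (by linarith : (0:ℝ) ≤ N-q),
      mul_nonneg hq (mul_nonneg (mul_nonneg hN.le hN.le) hN.le)]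
  · have h1 : 0 ≤ ((a-2*q)*(b-2*q))*(N^2+q^2) :=
      mul_nonneg (mul_nonneg (by linarith) (by linarith)) (by positivity)
    have hkey : (N^2+q^2)^2 ≤ 5*q*N^3 := by
      nlinarith [mul_nonneg (mul_nonneg (by linarith : (0:ℝ) ≤ 4*q-N) hN.le) (mul_nonneg hN.le hN.le),
        mul_nonneg (by nlinarith : (0:ℝ) ≤ N^2 - 3*q^2) (mul_nonneg hq hN.le),
        sq_nonneg (N-2*q), sq_nonneg (N^2 - 2*q*N), mul_nonneg (mul_nonneg hq hq) (sq_nonneg (N - 2*q)),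
        sq_nonneg (N^2-3*q^2), mul_nonneg (mul_nonneg (by linarith : (0:ℝ) ≤ 4*q-N) hq) (sq_nonneg N)]
    rcases lt_or_ge 0 q with hq0 | hq0
    · nlinarith [h1, e4, e5, e6, e7, hkey]
    · have : q = 0 := le_antisymm (by linarith) hq
      subst this
      nlinarith [h1, e1, e2, e4]

private lemma ineqII' (a b q N C : ℝ) (hN : 0 < N) (hC : 0 < C) (hq : 0 ≤ q) (hq2 : 2*q ≤ a)
    (hab : a ≤ b) (hdet : a*b - q^2 = N^2) (h2a : 2*a ≤ N) (hlow : C^2*N ≤ a) :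
    a*b*(a+b-2*q) ≤ N^3*(C^2+1/C^2) := by
  have ha : 0 < a := lt_of_lt_of_le (by positivity) hlow
  have h4 : N^4 = (a*b-q^2)^2 := by rw [hdet]; ring
  have h2 : a*(a*b*(a+b-2*q)) ≤ N^2*(a^2+N^2) := by
    nlinarith [mul_nonneg (mul_nonneg hq (by linarith : (0:ℝ) ≤ a - q))
      (by nlinarith : (0:ℝ) ≤ 2*(a*b) - q*(a+q))]
  set c := C^2 with hc
  have hc0 : 0 < c := by positivity
  have hac : a*c ≤ N := by nlinarith
  have hca : c*N ≤ a := hlow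
  have key : N^2*(a^2+N^2)*c ≤ a*N^3*c^2 + a*N^3 := by
    nlinarith [mul_nonneg (by nlinarith : (0:ℝ) ≤ N - a*c) (by nlinarith : (0:ℝ) ≤ a - N*c),
      mul_pos hN (mul_pos hN hN)]
  have hrhs : c*(N^3*(c+1/c)) = N^3*c^2 + N^3 := by
    field_simp
  have hfin : (a*c)*(a*b*(a+b-2*q)) ≤ (a*c)*(N^3*(c+1/c)) := by
    calc (a*c)*(a*b*(a+b-2*q)) = c*(a*(a*b*(a+b-2*q))) := by ring
    _ ≤ c*(N^2*(a^2+N^2)) := by nlinarith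
    _ ≤ a*(N^3*c^2 + N^3) := by linarith [key]
    _ = (a*c)*(N^3*(c+1/c)) := by rw [show (a*c)*(N^3*(c+1/c)) = a*(c*(N^3*(c+1/c))) by ring, hrhs]
  exact le_of_mul_le_mul_left hfin (by positivity)

private lemma part1' (a b q N C : ℝ) (hN : 0 < N) (hC : 0 < C) (hq : 0 ≤ q) (hq2 : 2*q ≤ a)
    (hab : a ≤ b) (hdet : a*b - q^2 = N^2) (hlow : C^2*N ≤ a) :
    b ≤ N * (C^2/4 + 1/C^2) := by
  have ha : 0 < a := lt_of_lt_of_le (by positivity) hlow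
  have haN : a^2 ≤ (4/3)*N^2 := by nlinarith
  have hC4 : C^2*a ≤ 4*N := by nlinarith
  have key : (C^2*a)*b ≤ (C^2*a)*(N*(C^2/4 + 1/C^2)) := by
    have hr : (C^2*a)*(N*(C^2/4+1/C^2)) = a*N*C^4/4 + a*N := by
      field_simp
    rw [hr]
    have hz : a*b - q^2 - N^2 = 0 := by linarith
    have e : C^2*(a*b - q^2 - N^2) = 0 := by rw [hz, mul_zero]
    nlinarith [e, mul_nonneg (by linarith : (0:ℝ) ≤ a - C^2*N) (by linarith : (0:ℝ) ≤ 4*N - C^2*a),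
      mul_nonneg (sq_nonneg C) (mul_nonneg (by linarith : (0:ℝ) ≤ a - 2*q) (by linarith : (0:ℝ) ≤ a + 2*q))]
  exact le_of_mul_le_mul_left key (by positivity)

set_option maxHeartbeats 1600000 in
/-- Let `Λ ⊂ ℝ²` be the lattice generated by a minimal basis `[V₁, V₂]` of
covolume `N` with `|V₁| ≤ |V₂|`, `|V₁·V₂| ≤ |V₁|²/2`, and `|V₁|² ≥ C²N`.  Then
`|V₂|² ≤ N(C²/4 + 1/C²)` and the circumradius `R` of the Dirichlet–Voronoi
cell at the origin satisfies `R² ≤ (N/4) max(5/2, C² + 1/C²)`. -/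
theorem voronoi_cell_radius_bound (N C : ℝ) (hN : 0 < N) (hC : 0 < C)
    (V₁ V₂ : ℝ × ℝ)
    (h12 : V₁.1 ^ 2 + V₁.2 ^ 2 ≤ V₂.1 ^ 2 + V₂.2 ^ 2)
    (hred : |V₁.1 * V₂.1 + V₁.2 * V₂.2| ≤ (V₁.1 ^ 2 + V₁.2 ^ 2) / 2)
    (hdet : |V₁.1 * V₂.2 - V₁.2 * V₂.1| = N)
    (hlow : C ^ 2 * N ≤ V₁.1 ^ 2 + V₁.2 ^ 2) :
    (V₂.1 ^ 2 + V₂.2 ^ 2 ≤ N * (C ^ 2 / 4 + 1 / C ^ 2)) ∧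
    (∀ x : ℝ × ℝ,
      (∀ m n : ℤ, x.1 ^ 2 + x.2 ^ 2 ≤
        (x.1 - ((m : ℝ) * V₁.1 + (n : ℝ) * V₂.1)) ^ 2 +
        (x.2 - ((m : ℝ) * V₁.2 + (n : ℝ) * V₂.2)) ^ 2) →
      x.1 ^ 2 + x.2 ^ 2 ≤ N / 4 * max (5 / 2) (C ^ 2 + 1 / C ^ 2)) := by
  obtain ⟨a, ha_def⟩ : ∃ a : ℝ, a = V₁.1 ^ 2 + V₁.2 ^ 2 := ⟨_, rfl⟩
  obtain ⟨b, hb_def⟩ : ∃ b : ℝ, b = V₂.1 ^ 2 + V₂.2 ^ 2 := ⟨_, rfl⟩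
  obtain ⟨p, hp_def⟩ : ∃ p : ℝ, p = V₁.1 * V₂.1 + V₁.2 * V₂.2 := ⟨_, rfl⟩
  have hq2 : 2*|p| ≤ a := by rw [hp_def, ha_def]; linarith [hred]
  have hq : (0:ℝ) ≤ |p| := abs_nonneg _
  have hab : a ≤ b := by rw [ha_def, hb_def]; exact h12
  have hlow' : C^2*N ≤ a := by rw [ha_def]; exact hlow
  have hN2 : (V₁.1 * V₂.2 - V₁.2 * V₂.1)^2 = N^2 := by rw [← hdet, sq_abs]
  have hdet' : a*b - |p|^2 = N^2 := by
    rw [sq_abs, ← hN2, ha_def, hb_def, hp_def]; ring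
  constructor
  · have := part1' a b (|p|) N C hN hC hq hq2 hab hdet' hlow'
    rw [hb_def] at this; exact this
  · intro x hx
    obtain ⟨u, hu_def⟩ : ∃ u : ℝ, u = 2*(x.1*V₁.1 + x.2*V₁.2) := ⟨_, rfl⟩
    obtain ⟨w, hw_def⟩ : ∃ w : ℝ, w = 2*(x.1*V₂.1 + x.2*V₂.2) := ⟨_, rfl⟩
    have hu1 : u ≤ a := by
      have h := hx 1 0; push_cast at h; rw [hu_def, ha_def]; nlinarith [h]
    have hu2 : -a ≤ u := by
      have h := hx (-1) 0; push_cast at h; rw [hu_def, ha_def]; nlinarith [h]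
    have hw1 : w ≤ b := by
      have h := hx 0 1; push_cast at h; rw [hw_def, hb_def]; nlinarith [h]
    have hw2 : -b ≤ w := by
      have h := hx 0 (-1); push_cast at h; rw [hw_def, hb_def]; nlinarith [h]
    have hs1 : u + w ≤ a + b + 2*p := by
      have h := hx 1 1; push_cast at h
      rw [hu_def, hw_def, ha_def, hb_def, hp_def]; nlinarith [h]
    have hs2 : -(a + b + 2*p) ≤ u + w := by
      have h := hx (-1) (-1); push_cast at h
      rw [hu_def, hw_def, ha_def, hb_def, hp_def]; nlinarith [h]
    have hd1 : u - w ≤ a + b - 2*p := by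
      have h := hx 1 (-1); push_cast at h
      rw [hu_def, hw_def, ha_def, hb_def, hp_def]; nlinarith [h]
    have hd2 : -(a + b - 2*p) ≤ u - w := by
      have h := hx (-1) 1; push_cast at h
      rw [hu_def, hw_def, ha_def, hb_def, hp_def]; nlinarith [h]
    have hform : b*u^2 - 2*p*u*w + a*w^2 = 4*N^2*(x.1^2 + x.2^2) := by
      rw [← hN2, hu_def, hw_def, ha_def, hb_def, hp_def]; ring
    have hQ : b*u^2 - 2*p*u*w + a*w^2 ≤ a*b*(a+b-2*|p|) := by
      rcases le_total p 0 with hp | hp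
      · have hqp : |p| = -p := abs_of_nonpos hp
        have h := ineqA' a b (|p|) u w hq hq2 hab hu2 hu1 hw2 hw1 (by rw [hqp]; linarith)
          (by rw [hqp]; linarith)
        rw [hqp] at h ⊢
        nlinarith [h]
      · have hqp : |p| = p := abs_of_nonneg hp
        have h := ineqA' a b (|p|) u (-w) hq hq2 hab hu2 hu1 (by linarith) (by linarith)
          (by rw [hqp]; linarith) (by rw [hqp]; linarith)
        rw [hqp] at h ⊢
        nlinarith [h]
    have hM : (5:ℝ)/2 ≤ max (5/2 : ℝ) (C ^ 2 + 1 / C ^ 2) := le_max_left _ _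
    have h3 : (0:ℝ) ≤ N^3 := by positivity
    have hbound : a*b*(a+b-2*|p|) ≤ N^3 * max (5/2 : ℝ) (C ^ 2 + 1 / C ^ 2) := by
      rcases le_total N (2*a) with h2a | h2a
      · have h := ineqI' a b (|p|) N hN hq hq2 hab hdet' h2a
        nlinarith [mul_le_mul_of_nonneg_left hM h3]
      · have h := ineqII' a b (|p|) N C hN hC hq hq2 hab hdet' h2a hlow'
        exact le_trans h (mul_le_mul_of_nonneg_left (le_max_right _ _) h3)
    have hfin : (4*N^2)*(x.1^2 + x.2^2) ≤ (4*N^2)*(N/4 * max (5/2 : ℝ) (C ^ 2 + 1 / C ^ 2)) := by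
      calc (4*N^2)*(x.1^2 + x.2^2) = b*u^2 - 2*p*u*w + a*w^2 := by linarith [hform]
      _ ≤ a*b*(a+b-2*|p|) := hQ
      _ ≤ N^3 * max (5/2 : ℝ) (C ^ 2 + 1 / C ^ 2) := hbound
      _ = (4*N^2)*(N/4 * max (5/2 : ℝ) (C ^ 2 + 1 / C ^ 2)) := by ring
    exact le_of_mul_le_mul_left hfin (by positivity)
end
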